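/- Let u₁, u₂, v₁, v₂ ∈ ℝ^n satisfy ⟨u₁,u₂⟩ = 0 and ⟨v₁,v₂⟩ = 0, and define F̃ : 𝒞_n → ℝ by F̃(x) = (⟨u₁,x⟩² + ⟨u₂,x⟩²)(⟨v₁,x⟩² + ⟨v₂,x⟩²). Then the derivative matrix of F̃ satisfies ‖D^{F̃}‖_op ≤ 40 n · max(‖u₁‖₂⁴, ‖u₂‖₂⁴, ‖v₁‖₂⁴, ‖v₂‖₂⁴). -/

import Mathlib

noncomputable section

open scoped BigOperators

/-- The point of the Boolean hypercube associated with a Boolean string. -/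
def sgnVec {n : ℕ} (b : Fin n → Bool) : Fin n → ℝ := fun i => if b i then 1 else -1

/-- Euclidean inner product on ℝ^n. -/
def dotR {n : ℕ} (u x : Fin n → ℝ) : ℝ := ∑ i, u i * x i

/-- Discrete derivative on the cube: `∂_i F(x) = (F(x^{i+}) − F(x^{i−}))/2`. -/
def dderiv {n : ℕ} (F : (Fin n → Bool) → ℝ) (i : Fin n) (b : Fin n → Bool) : ℝ :=
  (F (Function.update b i true) - F (Function.update b i false)) / 2

/-- The derivative matrix `D^F_{ij} = max_x |∂_i ∂_j F(x)|`. -/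
def derivMat {n : ℕ} (F : (Fin n → Bool) → ℝ) (i j : Fin n) : ℝ :=
  ⨆ b : Fin n → Bool, |dderiv (dderiv F j) i b|

/-- The `ℓ²→ℓ²` operator norm of an `n×n` matrix. -/
def matOpNorm {n : ℕ} (M : Fin n → Fin n → ℝ) : ℝ :=
  sSup { r : ℝ | ∃ x : Fin n → ℝ, (∑ i, x i ^ 2) = 1 ∧
    r = Real.sqrt (∑ i, (∑ j, M i j * x j) ^ 2) }

set_option maxHeartbeats 2000000

lemma sum_sgn_sq {n : ℕ} (b : Fin n → Bool) : (∑ i, sgnVec b i ^ 2) = n := by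
  have : ∀ i : Fin n, sgnVec b i ^ 2 = 1 := by
    intro i; simp only [sgnVec]; split <;> norm_num
  simp [this]

lemma csFin {n : ℕ} (u y : Fin n → ℝ) :
    (dotR u y) ^ 2 ≤ (∑ i, u i ^ 2) * (∑ i, y i ^ 2) :=
  Finset.sum_mul_sq_le_sq_mul_sq Finset.univ u y

lemma sumsq_eq_zero {n : ℕ} {u : Fin n → ℝ} (h : (∑ i, u i ^ 2) = 0) (y : Fin n → ℝ) :
    dotR u y = 0 := by
  have hz : ∀ i ∈ Finset.univ, u i ^ 2 = 0 :=
    (Finset.sum_eq_zero_iff_of_nonneg (fun i _ => sq_nonneg _)).1 h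
  have : ∀ i : Fin n, u i = 0 := fun i => by
    have := hz i (Finset.mem_univ i); exact pow_eq_zero_iff (two_ne_zero) |>.1 this
  simp [dotR, this]

lemma bessel2 {n : ℕ} (u₁ u₂ y : Fin n → ℝ) (h : dotR u₁ u₂ = 0) :
    (dotR u₁ y) ^ 2 + (dotR u₂ y) ^ 2 ≤
      max (∑ i, u₁ i ^ 2) (∑ i, u₂ i ^ 2) * (∑ i, y i ^ 2) := by
  set N₁ := ∑ i, u₁ i ^ 2 with hN₁
  set N₂ := ∑ i, u₂ i ^ 2 with hN₂
  set Y := ∑ i, y i ^ 2 with hY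
  set p := dotR u₁ y with hp
  set q := dotR u₂ y with hq
  have hN₁0 : 0 ≤ N₁ := Finset.sum_nonneg fun i _ => sq_nonneg _
  have hN₂0 : 0 ≤ N₂ := Finset.sum_nonneg fun i _ => sq_nonneg _
  have hY0 : 0 ≤ Y := Finset.sum_nonneg fun i _ => sq_nonneg _
  rcases eq_or_lt_of_le hN₁0 with h1 | h1
  · have hp0 : p = 0 := sumsq_eq_zero h1.symm y
    have := csFin u₂ y
    have hle : N₂ ≤ max N₁ N₂ := le_max_right _ _
    nlinarith [this]
  rcases eq_or_lt_of_le hN₂0 with h2 | h2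
  · have hq0 : q = 0 := sumsq_eq_zero h2.symm y
    have := csFin u₁ y
    have hle : N₁ ≤ max N₁ N₂ := le_max_left _ _
    nlinarith [this]
  -- main case
  have expand : (∑ i, (N₁ * N₂ * y i - p * N₂ * u₁ i - q * N₁ * u₂ i) ^ 2)
      = N₁ ^ 2 * N₂ ^ 2 * Y - p ^ 2 * N₂ ^ 2 * N₁ - q ^ 2 * N₁ ^ 2 * N₂ := by
    have pt : ∀ i : Fin n, (N₁ * N₂ * y i - p * N₂ * u₁ i - q * N₁ * u₂ i) ^ 2
        = N₁ ^ 2 * N₂ ^ 2 * (y i ^ 2) + p ^ 2 * N₂ ^ 2 * (u₁ i ^ 2) + q ^ 2 * N₁ ^ 2 * (u₂ i ^ 2)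
          - 2 * p * N₁ * N₂ ^ 2 * (u₁ i * y i) - 2 * q * N₁ ^ 2 * N₂ * (u₂ i * y i)
          + 2 * p * q * N₁ * N₂ * (u₁ i * u₂ i) := fun i => by ring
    rw [Finset.sum_congr rfl (fun i _ => pt i)]
    have hdu : (∑ i, u₁ i * y i) = p := rfl
    have hdv : (∑ i, u₂ i * y i) = q := rfl
    have hdo : (∑ i, u₁ i * u₂ i) = 0 := h
    simp only [Finset.sum_add_distrib, Finset.sum_sub_distrib, ← Finset.mul_sum,
      ← hN₁, ← hN₂, ← hY, hdu, hdv, hdo]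
    ring
  have hnn : 0 ≤ N₁ ^ 2 * N₂ ^ 2 * Y - p ^ 2 * N₂ ^ 2 * N₁ - q ^ 2 * N₁ ^ 2 * N₂ := by
    rw [← expand]; exact Finset.sum_nonneg fun i _ => sq_nonneg _
  have h12 : 0 < N₁ * N₂ := mul_pos h1 h2
  have hkey : p ^ 2 * N₂ + q ^ 2 * N₁ ≤ N₁ * N₂ * Y := by nlinarith [hnn, h12]
  have hle1 : N₁ ≤ max N₁ N₂ := le_max_left _ _
  have hle2 : N₂ ≤ max N₁ N₂ := le_max_right _ _
  have hT0 : 0 ≤ max N₁ N₂ := le_trans hN₁0 hle1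
  have e1 : p ^ 2 * (N₁ * N₂) ≤ max N₁ N₂ * (p ^ 2 * N₂) := by
    nlinarith [mul_nonneg (mul_nonneg (sq_nonneg p) hN₂0) (sub_nonneg.2 hle1)]
  have e2 : q ^ 2 * (N₁ * N₂) ≤ max N₁ N₂ * (q ^ 2 * N₁) := by
    nlinarith [mul_nonneg (mul_nonneg (sq_nonneg q) hN₁0) (sub_nonneg.2 hle2)]
  have e3 : max N₁ N₂ * (p ^ 2 * N₂ + q ^ 2 * N₁) ≤ max N₁ N₂ * (N₁ * N₂ * Y) :=
    mul_le_mul_of_nonneg_left hkey hT0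
  have final : (p ^ 2 + q ^ 2) * (N₁ * N₂) ≤ (max N₁ N₂ * Y) * (N₁ * N₂) := by nlinarith
  exact le_of_mul_le_mul_right final h12

lemma dot_sgn_update {n : ℕ} (u : Fin n → ℝ) (b : Fin n → Bool) (i : Fin n) :
    dotR u (sgnVec (Function.update b i true))
      = dotR u (sgnVec (Function.update b i false)) + 2 * u i := by
  have key : ∀ t : Bool, dotR u (sgnVec (Function.update b i t))
      = (∑ l ∈ Finset.univ.erase i, u l * sgnVec b l) + u i * (if t then 1 else -1) := by
    intro t
    rw [dotR, ← Finset.sum_erase_add _ _ (Finset.mem_univ i)]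
    congr 1
    · exact Finset.sum_congr rfl fun l hl => by
        rw [sgnVec, sgnVec, Function.update_of_ne (Finset.ne_of_mem_erase hl)]
    · rw [sgnVec, Function.update_self]
  rw [key true, key false]
  norm_num
  ring

lemma abs_le_of_sq_le_sq'' (x y : ℝ) (h : x ^ 2 ≤ y ^ 2) (hy : 0 ≤ y) : |x| ≤ y := by
  rw [← Real.sqrt_sq hy, ← Real.sqrt_sq_eq_abs]
  exact Real.sqrt_le_sqrt h

lemma cs2' (p1 p2 a1 a2 : ℝ) : (p1 * a1 + p2 * a2) ^ 2 ≤ (p1 ^ 2 + p2 ^ 2) * (a1 ^ 2 + a2 ^ 2) := by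
  nlinarith [sq_nonneg (p1 * a2 - p2 * a1)]

lemma corner_bound (nS p1 p2 q1 q2 a1 a2 b1 b2 c1 c2 d1 d2 : ℝ)
    (hnS : 0 ≤ nS)
    (hu00 : (p1 - a1 - b1) ^ 2 + (p2 - a2 - b2) ^ 2 ≤ nS)
    (hu10 : (p1 + a1 - b1) ^ 2 + (p2 + a2 - b2) ^ 2 ≤ nS)
    (hu01 : (p1 - a1 + b1) ^ 2 + (p2 - a2 + b2) ^ 2 ≤ nS)
    (hu11 : (p1 + a1 + b1) ^ 2 + (p2 + a2 + b2) ^ 2 ≤ nS)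
    (hv00 : (q1 - c1 - d1) ^ 2 + (q2 - c2 - d2) ^ 2 ≤ nS)
    (hv10 : (q1 + c1 - d1) ^ 2 + (q2 + c2 - d2) ^ 2 ≤ nS)
    (hv01 : (q1 - c1 + d1) ^ 2 + (q2 - c2 + d2) ^ 2 ≤ nS)
    (hv11 : (q1 + c1 + d1) ^ 2 + (q2 + c2 + d2) ^ 2 ≤ nS) :
    |((((p1 + a1 + b1) ^ 2 + (p2 + a2 + b2) ^ 2) * ((q1 + c1 + d1) ^ 2 + (q2 + c2 + d2) ^ 2)
        - ((p1 + a1 - b1) ^ 2 + (p2 + a2 - b2) ^ 2) * ((q1 + c1 - d1) ^ 2 + (q2 + c2 - d2) ^ 2)) / 2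
      - (((p1 - a1 + b1) ^ 2 + (p2 - a2 + b2) ^ 2) * ((q1 - c1 + d1) ^ 2 + (q2 - c2 + d2) ^ 2)
        - ((p1 - a1 - b1) ^ 2 + (p2 - a2 - b2) ^ 2) * ((q1 - c1 - d1) ^ 2 + (q2 - c2 - d2) ^ 2)) / 2) / 2|
      ≤ 2 * nS * (Real.sqrt (a1 ^ 2 + a2 ^ 2) * Real.sqrt (b1 ^ 2 + b2 ^ 2)
          + Real.sqrt (c1 ^ 2 + c2 ^ 2) * Real.sqrt (d1 ^ 2 + d2 ^ 2))
        + 4 * nS * (Real.sqrt (a1 ^ 2 + a2 ^ 2) * Real.sqrt (d1 ^ 2 + d2 ^ 2)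
          + Real.sqrt (b1 ^ 2 + b2 ^ 2) * Real.sqrt (c1 ^ 2 + c2 ^ 2)) := by
  have hA0 : (p1 ^ 2 + p2 ^ 2) + (a1 ^ 2 + a2 ^ 2) + (b1 ^ 2 + b2 ^ 2) ≤ nS := by linarith only [hu00, hu10, hu01, hu11]
  have hB0 : (q1 ^ 2 + q2 ^ 2) + (c1 ^ 2 + c2 ^ 2) + (d1 ^ 2 + d2 ^ 2) ≤ nS := by linarith only [hv00, hv10, hv01, hv11]
  have hp : p1 ^ 2 + p2 ^ 2 ≤ nS := by linarith only [hA0, sq_nonneg a1, sq_nonneg a2, sq_nonneg b1, sq_nonneg b2]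
  have hq : q1 ^ 2 + q2 ^ 2 ≤ nS := by linarith only [hB0, sq_nonneg c1, sq_nonneg c2, sq_nonneg d1, sq_nonneg d2]
  set sa := Real.sqrt (a1 ^ 2 + a2 ^ 2) with hsa
  set sb := Real.sqrt (b1 ^ 2 + b2 ^ 2) with hsb
  set sc := Real.sqrt (c1 ^ 2 + c2 ^ 2) with hsc
  set sd := Real.sqrt (d1 ^ 2 + d2 ^ 2) with hsd
  set t := Real.sqrt nS with hts
  have ht : t ^ 2 = nS := Real.sq_sqrt hnS
  have ht0 : 0 ≤ t := Real.sqrt_nonneg _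
  have hsa2 : sa ^ 2 = a1 ^ 2 + a2 ^ 2 := Real.sq_sqrt (by positivity)
  have hsb2 : sb ^ 2 = b1 ^ 2 + b2 ^ 2 := Real.sq_sqrt (by positivity)
  have hsc2 : sc ^ 2 = c1 ^ 2 + c2 ^ 2 := Real.sq_sqrt (by positivity)
  have hsd2 : sd ^ 2 = d1 ^ 2 + d2 ^ 2 := Real.sq_sqrt (by positivity)
  have hsa0 : 0 ≤ sa := Real.sqrt_nonneg _
  have hsb0 : 0 ≤ sb := Real.sqrt_nonneg _
  have hsc0 : 0 ≤ sc := Real.sqrt_nonneg _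
  have hsd0 : 0 ≤ sd := Real.sqrt_nonneg _
  -- the four structured factors
  have hval : (((((p1 + a1 + b1) ^ 2 + (p2 + a2 + b2) ^ 2) * ((q1 + c1 + d1) ^ 2 + (q2 + c2 + d2) ^ 2)
        - ((p1 + a1 - b1) ^ 2 + (p2 + a2 - b2) ^ 2) * ((q1 + c1 - d1) ^ 2 + (q2 + c2 - d2) ^ 2)) / 2
      - (((p1 - a1 + b1) ^ 2 + (p2 - a2 + b2) ^ 2) * ((q1 - c1 + d1) ^ 2 + (q2 - c2 + d2) ^ 2)
        - ((p1 - a1 - b1) ^ 2 + (p2 - a2 - b2) ^ 2) * ((q1 - c1 - d1) ^ 2 + (q2 - c2 - d2) ^ 2)) / 2) / 2)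
      = (p1 ^ 2 + p2 ^ 2 + a1 ^ 2 + a2 ^ 2 + b1 ^ 2 + b2 ^ 2) * (2 * (c1 * d1 + c2 * d2))
        + (2 * (p1 * a1 + p2 * a2)) * (2 * (q1 * d1 + q2 * d2))
        + (2 * (p1 * b1 + p2 * b2)) * (2 * (q1 * c1 + q2 * c2))
        + (2 * (a1 * b1 + a2 * b2)) * (q1 ^ 2 + q2 ^ 2 + c1 ^ 2 + c2 ^ 2 + d1 ^ 2 + d2 ^ 2) := by
    ring
  rw [hval]
  -- bounds on each factor
  have hA0' : |p1 ^ 2 + p2 ^ 2 + a1 ^ 2 + a2 ^ 2 + b1 ^ 2 + b2 ^ 2| ≤ nS := by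
    rw [abs_of_nonneg (by positivity)]; linarith
  have hB0' : |q1 ^ 2 + q2 ^ 2 + c1 ^ 2 + c2 ^ 2 + d1 ^ 2 + d2 ^ 2| ≤ nS := by
    rw [abs_of_nonneg (by positivity)]; linarith
  have hB3 : |2 * (c1 * d1 + c2 * d2)| ≤ 2 * (sc * sd) := by
    apply abs_le_of_sq_le_sq'' _ _ _ (by positivity)
    have h1 := cs2' c1 c2 d1 d2
    have e : (2 * (sc * sd)) ^ 2 = 4 * ((c1 ^ 2 + c2 ^ 2) * (d1 ^ 2 + d2 ^ 2)) := by
      rw [mul_pow, mul_pow, hsc2, hsd2]; ring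
    calc (2 * (c1 * d1 + c2 * d2)) ^ 2 = 4 * (c1 * d1 + c2 * d2) ^ 2 := by ring
      _ ≤ 4 * ((c1 ^ 2 + c2 ^ 2) * (d1 ^ 2 + d2 ^ 2)) := by linarith only [h1]
      _ = (2 * (sc * sd)) ^ 2 := e.symm
  have hA3 : |2 * (a1 * b1 + a2 * b2)| ≤ 2 * (sa * sb) := by
    apply abs_le_of_sq_le_sq'' _ _ _ (by positivity)
    have h1 := cs2' a1 a2 b1 b2
    have e : (2 * (sa * sb)) ^ 2 = 4 * ((a1 ^ 2 + a2 ^ 2) * (b1 ^ 2 + b2 ^ 2)) := by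
      rw [mul_pow, mul_pow, hsa2, hsb2]; ring
    calc (2 * (a1 * b1 + a2 * b2)) ^ 2 = 4 * (a1 * b1 + a2 * b2) ^ 2 := by ring
      _ ≤ 4 * ((a1 ^ 2 + a2 ^ 2) * (b1 ^ 2 + b2 ^ 2)) := by linarith only [h1]
      _ = (2 * (sa * sb)) ^ 2 := e.symm
  have hA1 : |2 * (p1 * a1 + p2 * a2)| ≤ 2 * (t * sa) := by
    apply abs_le_of_sq_le_sq'' _ _ _ (by positivity)
    have h1 := cs2' p1 p2 a1 a2
    have h2 : (p1 ^ 2 + p2 ^ 2) * (a1 ^ 2 + a2 ^ 2) ≤ nS * (a1 ^ 2 + a2 ^ 2) :=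
      mul_le_mul_of_nonneg_right hp (by positivity)
    have e : (2 * (t * sa)) ^ 2 = 4 * (nS * (a1 ^ 2 + a2 ^ 2)) := by
      rw [mul_pow, mul_pow, ht, hsa2]; ring
    calc (2 * (p1 * a1 + p2 * a2)) ^ 2 = 4 * (p1 * a1 + p2 * a2) ^ 2 := by ring
      _ ≤ 4 * ((p1 ^ 2 + p2 ^ 2) * (a1 ^ 2 + a2 ^ 2)) := by linarith only [h1]
      _ ≤ 4 * (nS * (a1 ^ 2 + a2 ^ 2)) := by linarith only [h2]
      _ = (2 * (t * sa)) ^ 2 := e.symm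
  have hA2 : |2 * (p1 * b1 + p2 * b2)| ≤ 2 * (t * sb) := by
    apply abs_le_of_sq_le_sq'' _ _ _ (by positivity)
    have h1 := cs2' p1 p2 b1 b2
    have h2 : (p1 ^ 2 + p2 ^ 2) * (b1 ^ 2 + b2 ^ 2) ≤ nS * (b1 ^ 2 + b2 ^ 2) :=
      mul_le_mul_of_nonneg_right hp (by positivity)
    have e : (2 * (t * sb)) ^ 2 = 4 * (nS * (b1 ^ 2 + b2 ^ 2)) := by
      rw [mul_pow, mul_pow, ht, hsb2]; ring
    calc (2 * (p1 * b1 + p2 * b2)) ^ 2 = 4 * (p1 * b1 + p2 * b2) ^ 2 := by ring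
      _ ≤ 4 * ((p1 ^ 2 + p2 ^ 2) * (b1 ^ 2 + b2 ^ 2)) := by linarith only [h1]
      _ ≤ 4 * (nS * (b1 ^ 2 + b2 ^ 2)) := by linarith only [h2]
      _ = (2 * (t * sb)) ^ 2 := e.symm
  have hB1 : |2 * (q1 * c1 + q2 * c2)| ≤ 2 * (t * sc) := by
    apply abs_le_of_sq_le_sq'' _ _ _ (by positivity)
    have h1 := cs2' q1 q2 c1 c2
    have h2 : (q1 ^ 2 + q2 ^ 2) * (c1 ^ 2 + c2 ^ 2) ≤ nS * (c1 ^ 2 + c2 ^ 2) :=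
      mul_le_mul_of_nonneg_right hq (by positivity)
    have e : (2 * (t * sc)) ^ 2 = 4 * (nS * (c1 ^ 2 + c2 ^ 2)) := by
      rw [mul_pow, mul_pow, ht, hsc2]; ring
    calc (2 * (q1 * c1 + q2 * c2)) ^ 2 = 4 * (q1 * c1 + q2 * c2) ^ 2 := by ring
      _ ≤ 4 * ((q1 ^ 2 + q2 ^ 2) * (c1 ^ 2 + c2 ^ 2)) := by linarith only [h1]
      _ ≤ 4 * (nS * (c1 ^ 2 + c2 ^ 2)) := by linarith only [h2]
      _ = (2 * (t * sc)) ^ 2 := e.symm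
  have hB2 : |2 * (q1 * d1 + q2 * d2)| ≤ 2 * (t * sd) := by
    apply abs_le_of_sq_le_sq'' _ _ _ (by positivity)
    have h1 := cs2' q1 q2 d1 d2
    have h2 : (q1 ^ 2 + q2 ^ 2) * (d1 ^ 2 + d2 ^ 2) ≤ nS * (d1 ^ 2 + d2 ^ 2) :=
      mul_le_mul_of_nonneg_right hq (by positivity)
    have e : (2 * (t * sd)) ^ 2 = 4 * (nS * (d1 ^ 2 + d2 ^ 2)) := by
      rw [mul_pow, mul_pow, ht, hsd2]; ring
    calc (2 * (q1 * d1 + q2 * d2)) ^ 2 = 4 * (q1 * d1 + q2 * d2) ^ 2 := by ring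
      _ ≤ 4 * ((q1 ^ 2 + q2 ^ 2) * (d1 ^ 2 + d2 ^ 2)) := by linarith only [h1]
      _ ≤ 4 * (nS * (d1 ^ 2 + d2 ^ 2)) := by linarith only [h2]
      _ = (2 * (t * sd)) ^ 2 := e.symm
  -- assemble
  set A0 := p1 ^ 2 + p2 ^ 2 + a1 ^ 2 + a2 ^ 2 + b1 ^ 2 + b2 ^ 2
  set B0 := q1 ^ 2 + q2 ^ 2 + c1 ^ 2 + c2 ^ 2 + d1 ^ 2 + d2 ^ 2
  set A1 := 2 * (p1 * a1 + p2 * a2)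
  set A2 := 2 * (p1 * b1 + p2 * b2)
  set A3 := 2 * (a1 * b1 + a2 * b2)
  set B1 := 2 * (q1 * c1 + q2 * c2)
  set B2 := 2 * (q1 * d1 + q2 * d2)
  set B3 := 2 * (c1 * d1 + c2 * d2)
  have habs : |A0 * B3 + A1 * B2 + A2 * B1 + A3 * B0|
      ≤ |A0| * |B3| + |A1| * |B2| + |A2| * |B1| + |A3| * |B0| := by
    calc |A0 * B3 + A1 * B2 + A2 * B1 + A3 * B0|
        ≤ |A0 * B3 + A1 * B2 + A2 * B1| + |A3 * B0| := abs_add_le _ _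
      _ ≤ (|A0 * B3 + A1 * B2| + |A2 * B1|) + |A3 * B0| :=
          add_le_add_left (abs_add_le _ _) _
      _ ≤ ((|A0 * B3| + |A1 * B2|) + |A2 * B1|) + |A3 * B0| :=
          add_le_add_left (add_le_add_left (abs_add_le _ _) _) _
      _ = |A0| * |B3| + |A1| * |B2| + |A2| * |B1| + |A3| * |B0| := by
          rw [abs_mul A0 B3, abs_mul A1 B2, abs_mul A2 B1, abs_mul A3 B0]
  have e1 : |A0| * |B3| ≤ nS * (2 * (sc * sd)) :=
    mul_le_mul hA0' hB3 (abs_nonneg _) hnS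
  have e2 : |A1| * |B2| ≤ (2 * (t * sa)) * (2 * (t * sd)) :=
    mul_le_mul hA1 hB2 (abs_nonneg _) (by positivity)
  have e3 : |A2| * |B1| ≤ (2 * (t * sb)) * (2 * (t * sc)) :=
    mul_le_mul hA2 hB1 (abs_nonneg _) (by positivity)
  have e4 : |A3| * |B0| ≤ (2 * (sa * sb)) * nS :=
    mul_le_mul hA3 hB0' (abs_nonneg _) (by positivity)
  calc |A0 * B3 + A1 * B2 + A2 * B1 + A3 * B0|
      ≤ |A0| * |B3| + |A1| * |B2| + |A2| * |B1| + |A3| * |B0| := habs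
    _ ≤ nS * (2 * (sc * sd)) + (2 * (t * sa)) * (2 * (t * sd)) + (2 * (t * sb)) * (2 * (t * sc))
          + (2 * (sa * sb)) * nS := by linarith only [e1, e2, e3, e4]
    _ = 2 * nS * (sa * sb + sc * sd) + 4 * nS * (sa * sd + sb * sc) := by rw [← ht]; ring

def Uvec {n : ℕ} (u₁ u₂ : Fin n → ℝ) : Fin n → ℝ := fun l => Real.sqrt (u₁ l ^ 2 + u₂ l ^ 2)

lemma entry_bound {n : ℕ} (u₁ u₂ v₁ v₂ : Fin n → ℝ) (hu : dotR u₁ u₂ = 0) (hv : dotR v₁ v₂ = 0)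
    (S : ℝ) (hS1 : (∑ i, u₁ i ^ 2) ≤ S) (hS2 : (∑ i, u₂ i ^ 2) ≤ S)
    (hS3 : (∑ i, v₁ i ^ 2) ≤ S) (hS4 : (∑ i, v₂ i ^ 2) ≤ S) (hS0 : 0 ≤ S) (i j : Fin n) :
    derivMat (fun b => (dotR u₁ (sgnVec b) ^ 2 + dotR u₂ (sgnVec b) ^ 2) *
        (dotR v₁ (sgnVec b) ^ 2 + dotR v₂ (sgnVec b) ^ 2)) i j
      ≤ 2 * ((n : ℝ) * S) * (Uvec u₁ u₂ i * Uvec u₁ u₂ j + Uvec v₁ v₂ i * Uvec v₁ v₂ j)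
        + 4 * ((n : ℝ) * S) * (Uvec u₁ u₂ i * Uvec v₁ v₂ j + Uvec u₁ u₂ j * Uvec v₁ v₂ i) := by
  have hnS : (0:ℝ) ≤ (n:ℝ) * S := mul_nonneg (Nat.cast_nonneg n) hS0
  simp only [Uvec]
  unfold derivMat
  apply ciSup_le
  intro b
  by_cases hij : i = j
  · subst hij
    have hzero : ∀ (G : (Fin n → Bool) → ℝ), dderiv (dderiv G i) i b = 0 := by
      intro G; simp [dderiv, Function.update_idem]
    rw [hzero, abs_zero]
    positivity
  · have hcu : ∀ c : Fin n → Bool,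
        (dotR u₁ (sgnVec c)) ^ 2 + (dotR u₂ (sgnVec c)) ^ 2 ≤ (n:ℝ) * S := by
      intro c
      have h := bessel2 u₁ u₂ (sgnVec c) hu
      rw [sum_sgn_sq] at h
      calc (dotR u₁ (sgnVec c)) ^ 2 + (dotR u₂ (sgnVec c)) ^ 2
          ≤ max (∑ l, u₁ l ^ 2) (∑ l, u₂ l ^ 2) * (n:ℝ) := h
        _ ≤ S * (n:ℝ) := mul_le_mul_of_nonneg_right (max_le hS1 hS2) (Nat.cast_nonneg n)
        _ = (n:ℝ) * S := mul_comm _ _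
    have hcv : ∀ c : Fin n → Bool,
        (dotR v₁ (sgnVec c)) ^ 2 + (dotR v₂ (sgnVec c)) ^ 2 ≤ (n:ℝ) * S := by
      intro c
      have h := bessel2 v₁ v₂ (sgnVec c) hv
      rw [sum_sgn_sq] at h
      calc (dotR v₁ (sgnVec c)) ^ 2 + (dotR v₂ (sgnVec c)) ^ 2
          ≤ max (∑ l, v₁ l ^ 2) (∑ l, v₂ l ^ 2) * (n:ℝ) := h
        _ ≤ S * (n:ℝ) := mul_le_mul_of_nonneg_right (max_le hS3 hS4) (Nat.cast_nonneg n)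
        _ = (n:ℝ) * S := mul_comm _ _
    have h01 : ∀ w : Fin n → ℝ, dotR w (sgnVec (Function.update (Function.update b i false) j true))
        = dotR w (sgnVec (Function.update (Function.update b i false) j false)) + 2 * w j :=
      fun w => dot_sgn_update w _ j
    have h10 : ∀ w : Fin n → ℝ, dotR w (sgnVec (Function.update (Function.update b i true) j false))
        = dotR w (sgnVec (Function.update (Function.update b i false) j false)) + 2 * w i := by
      intro w
      rw [Function.update_comm hij, Function.update_comm hij]
      exact dot_sgn_update w _ i
    have h11 : ∀ w : Fin n → ℝ, dotR w (sgnVec (Function.update (Function.update b i true) j true))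
        = dotR w (sgnVec (Function.update (Function.update b i false) j false)) + 2 * w i + 2 * w j := by
      intro w
      rw [dot_sgn_update w (Function.update b i true) j, h10 w]
    have hu00 : ((dotR u₁ (sgnVec (Function.update (Function.update b i false) j false)) + u₁ i + u₁ j - u₁ i - u₁ j) ^ 2 + (dotR u₂ (sgnVec (Function.update (Function.update b i false) j false)) + u₂ i + u₂ j - u₂ i - u₂ j) ^ 2) ≤ (n:ℝ) * S := by
      rw [show (dotR u₁ (sgnVec (Function.update (Function.update b i false) j false)) + u₁ i + u₁ j - u₁ i - u₁ j) = dotR u₁ (sgnVec (Function.update (Function.update b i false) j false)) from by ring,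
          show (dotR u₂ (sgnVec (Function.update (Function.update b i false) j false)) + u₂ i + u₂ j - u₂ i - u₂ j) = dotR u₂ (sgnVec (Function.update (Function.update b i false) j false)) from by ring]
      exact hcu _
    have hu10 : ((dotR u₁ (sgnVec (Function.update (Function.update b i false) j false)) + u₁ i + u₁ j + u₁ i - u₁ j) ^ 2 + (dotR u₂ (sgnVec (Function.update (Function.update b i false) j false)) + u₂ i + u₂ j + u₂ i - u₂ j) ^ 2) ≤ (n:ℝ) * S := by
      rw [show (dotR u₁ (sgnVec (Function.update (Function.update b i false) j false)) + u₁ i + u₁ j + u₁ i - u₁ j) = dotR u₁ (sgnVec (Function.update (Function.update b i true) j false)) from by rw [h10 u₁]; ring,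
          show (dotR u₂ (sgnVec (Function.update (Function.update b i false) j false)) + u₂ i + u₂ j + u₂ i - u₂ j) = dotR u₂ (sgnVec (Function.update (Function.update b i true) j false)) from by rw [h10 u₂]; ring]
      exact hcu _
    have hu01 : ((dotR u₁ (sgnVec (Function.update (Function.update b i false) j false)) + u₁ i + u₁ j - u₁ i + u₁ j) ^ 2 + (dotR u₂ (sgnVec (Function.update (Function.update b i false) j false)) + u₂ i + u₂ j - u₂ i + u₂ j) ^ 2) ≤ (n:ℝ) * S := by
      rw [show (dotR u₁ (sgnVec (Function.update (Function.update b i false) j false)) + u₁ i + u₁ j - u₁ i + u₁ j) = dotR u₁ (sgnVec (Function.update (Function.update b i false) j true)) from by rw [h01 u₁]; ring,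
          show (dotR u₂ (sgnVec (Function.update (Function.update b i false) j false)) + u₂ i + u₂ j - u₂ i + u₂ j) = dotR u₂ (sgnVec (Function.update (Function.update b i false) j true)) from by rw [h01 u₂]; ring]
      exact hcu _
    have hu11 : ((dotR u₁ (sgnVec (Function.update (Function.update b i false) j false)) + u₁ i + u₁ j + u₁ i + u₁ j) ^ 2 + (dotR u₂ (sgnVec (Function.update (Function.update b i false) j false)) + u₂ i + u₂ j + u₂ i + u₂ j) ^ 2) ≤ (n:ℝ) * S := by
      rw [show (dotR u₁ (sgnVec (Function.update (Function.update b i false) j false)) + u₁ i + u₁ j + u₁ i + u₁ j) = dotR u₁ (sgnVec (Function.update (Function.update b i true) j true)) from by rw [h11 u₁]; ring,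
          show (dotR u₂ (sgnVec (Function.update (Function.update b i false) j false)) + u₂ i + u₂ j + u₂ i + u₂ j) = dotR u₂ (sgnVec (Function.update (Function.update b i true) j true)) from by rw [h11 u₂]; ring]
      exact hcu _
    have hv00 : ((dotR v₁ (sgnVec (Function.update (Function.update b i false) j false)) + v₁ i + v₁ j - v₁ i - v₁ j) ^ 2 + (dotR v₂ (sgnVec (Function.update (Function.update b i false) j false)) + v₂ i + v₂ j - v₂ i - v₂ j) ^ 2) ≤ (n:ℝ) * S := by
      rw [show (dotR v₁ (sgnVec (Function.update (Function.update b i false) j false)) + v₁ i + v₁ j - v₁ i - v₁ j) = dotR v₁ (sgnVec (Function.update (Function.update b i false) j false)) from by ring,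
          show (dotR v₂ (sgnVec (Function.update (Function.update b i false) j false)) + v₂ i + v₂ j - v₂ i - v₂ j) = dotR v₂ (sgnVec (Function.update (Function.update b i false) j false)) from by ring]
      exact hcv _
    have hv10 : ((dotR v₁ (sgnVec (Function.update (Function.update b i false) j false)) + v₁ i + v₁ j + v₁ i - v₁ j) ^ 2 + (dotR v₂ (sgnVec (Function.update (Function.update b i false) j false)) + v₂ i + v₂ j + v₂ i - v₂ j) ^ 2) ≤ (n:ℝ) * S := by
      rw [show (dotR v₁ (sgnVec (Function.update (Function.update b i false) j false)) + v₁ i + v₁ j + v₁ i - v₁ j) = dotR v₁ (sgnVec (Function.update (Function.update b i true) j false)) from by rw [h10 v₁]; ring,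
          show (dotR v₂ (sgnVec (Function.update (Function.update b i false) j false)) + v₂ i + v₂ j + v₂ i - v₂ j) = dotR v₂ (sgnVec (Function.update (Function.update b i true) j false)) from by rw [h10 v₂]; ring]
      exact hcv _
    have hv01 : ((dotR v₁ (sgnVec (Function.update (Function.update b i false) j false)) + v₁ i + v₁ j - v₁ i + v₁ j) ^ 2 + (dotR v₂ (sgnVec (Function.update (Function.update b i false) j false)) + v₂ i + v₂ j - v₂ i + v₂ j) ^ 2) ≤ (n:ℝ) * S := by
      rw [show (dotR v₁ (sgnVec (Function.update (Function.update b i false) j false)) + v₁ i + v₁ j - v₁ i + v₁ j) = dotR v₁ (sgnVec (Function.update (Function.update b i false) j true)) from by rw [h01 v₁]; ring,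
          show (dotR v₂ (sgnVec (Function.update (Function.update b i false) j false)) + v₂ i + v₂ j - v₂ i + v₂ j) = dotR v₂ (sgnVec (Function.update (Function.update b i false) j true)) from by rw [h01 v₂]; ring]
      exact hcv _
    have hv11 : ((dotR v₁ (sgnVec (Function.update (Function.update b i false) j false)) + v₁ i + v₁ j + v₁ i + v₁ j) ^ 2 + (dotR v₂ (sgnVec (Function.update (Function.update b i false) j false)) + v₂ i + v₂ j + v₂ i + v₂ j) ^ 2) ≤ (n:ℝ) * S := by
      rw [show (dotR v₁ (sgnVec (Function.update (Function.update b i false) j false)) + v₁ i + v₁ j + v₁ i + v₁ j) = dotR v₁ (sgnVec (Function.update (Function.update b i true) j true)) from by rw [h11 v₁]; ring,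
          show (dotR v₂ (sgnVec (Function.update (Function.update b i false) j false)) + v₂ i + v₂ j + v₂ i + v₂ j) = dotR v₂ (sgnVec (Function.update (Function.update b i true) j true)) from by rw [h11 v₂]; ring]
      exact hcv _
    have hmain := corner_bound ((n:ℝ) * S)
      (dotR u₁ (sgnVec (Function.update (Function.update b i false) j false)) + u₁ i + u₁ j) (dotR u₂ (sgnVec (Function.update (Function.update b i false) j false)) + u₂ i + u₂ j) (dotR v₁ (sgnVec (Function.update (Function.update b i false) j false)) + v₁ i + v₁ j) (dotR v₂ (sgnVec (Function.update (Function.update b i false) j false)) + v₂ i + v₂ j)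
      (u₁ i) (u₂ i) (u₁ j) (u₂ j) (v₁ i) (v₂ i) (v₁ j) (v₂ j)
      hnS hu00 hu10 hu01 hu11 hv00 hv10 hv01 hv11
    have hveq : dderiv (dderiv (fun b => (dotR u₁ (sgnVec b) ^ 2 + dotR u₂ (sgnVec b) ^ 2) *
        (dotR v₁ (sgnVec b) ^ 2 + dotR v₂ (sgnVec b) ^ 2)) j) i b
        = ((((dotR u₁ (sgnVec (Function.update (Function.update b i false) j false)) + u₁ i + u₁ j + u₁ i + u₁ j) ^ 2 + (dotR u₂ (sgnVec (Function.update (Function.update b i false) j false)) + u₂ i + u₂ j + u₂ i + u₂ j) ^ 2) * ((dotR v₁ (sgnVec (Function.update (Function.update b i false) j false)) + v₁ i + v₁ j + v₁ i + v₁ j) ^ 2 + (dotR v₂ (sgnVec (Function.update (Function.update b i false) j false)) + v₂ i + v₂ j + v₂ i + v₂ j) ^ 2)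
        - ((dotR u₁ (sgnVec (Function.update (Function.update b i false) j false)) + u₁ i + u₁ j + u₁ i - u₁ j) ^ 2 + (dotR u₂ (sgnVec (Function.update (Function.update b i false) j false)) + u₂ i + u₂ j + u₂ i - u₂ j) ^ 2) * ((dotR v₁ (sgnVec (Function.update (Function.update b i false) j false)) + v₁ i + v₁ j + v₁ i - v₁ j) ^ 2 + (dotR v₂ (sgnVec (Function.update (Function.update b i false) j false)) + v₂ i + v₂ j + v₂ i - v₂ j) ^ 2)) / 2
      - (((dotR u₁ (sgnVec (Function.update (Function.update b i false) j false)) + u₁ i + u₁ j - u₁ i + u₁ j) ^ 2 + (dotR u₂ (sgnVec (Function.update (Function.update b i false) j false)) + u₂ i + u₂ j - u₂ i + u₂ j) ^ 2) * ((dotR v₁ (sgnVec (Function.update (Function.update b i false) j false)) + v₁ i + v₁ j - v₁ i + v₁ j) ^ 2 + (dotR v₂ (sgnVec (Function.update (Function.update b i false) j false)) + v₂ i + v₂ j - v₂ i + v₂ j) ^ 2)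
        - ((dotR u₁ (sgnVec (Function.update (Function.update b i false) j false)) + u₁ i + u₁ j - u₁ i - u₁ j) ^ 2 + (dotR u₂ (sgnVec (Function.update (Function.update b i false) j false)) + u₂ i + u₂ j - u₂ i - u₂ j) ^ 2) * ((dotR v₁ (sgnVec (Function.update (Function.update b i false) j false)) + v₁ i + v₁ j - v₁ i - v₁ j) ^ 2 + (dotR v₂ (sgnVec (Function.update (Function.update b i false) j false)) + v₂ i + v₂ j - v₂ i - v₂ j) ^ 2)) / 2) / 2 := by
      simp only [dderiv]
      rw [h11 u₁, h11 u₂, h11 v₁, h11 v₂, h10 u₁, h10 u₂, h10 v₁, h10 v₂,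
          h01 u₁, h01 u₂, h01 v₁, h01 v₂]
      ring
    rw [hveq]
    exact hmain

lemma max_sq_of_nonneg {a b : ℝ} (ha : 0 ≤ a) (hb : 0 ≤ b) :
    max (a ^ 2) (b ^ 2) = (max a b) ^ 2 := by
  rcases le_total a b with h | h
  · rw [max_eq_right (pow_le_pow_left₀ ha h 2), max_eq_right h]
  · rw [max_eq_left (pow_le_pow_left₀ hb h 2), max_eq_left h]

/-- Derivative-matrix bound for
`F̃(x) = (⟨u₁,x⟩² + ⟨u₂,x⟩²)(⟨v₁,x⟩² + ⟨v₂,x⟩²)` with orthogonal pairs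
(second part of Lemma `vectorproductdob` of the paper). -/
theorem derivMat_quartic_pairs (n : ℕ) (u₁ u₂ v₁ v₂ : Fin n → ℝ)
    (hu : dotR u₁ u₂ = 0) (hv : dotR v₁ v₂ = 0) :
    matOpNorm (derivMat (fun b =>
        (dotR u₁ (sgnVec b) ^ 2 + dotR u₂ (sgnVec b) ^ 2) *
        (dotR v₁ (sgnVec b) ^ 2 + dotR v₂ (sgnVec b) ^ 2))) ≤
      40 * n * max (max ((∑ i, u₁ i ^ 2) ^ 2) ((∑ i, u₂ i ^ 2) ^ 2))
        (max ((∑ i, v₁ i ^ 2) ^ 2) ((∑ i, v₂ i ^ 2) ^ 2)) := by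
  have hN1 : (0:ℝ) ≤ ∑ i, u₁ i ^ 2 := Finset.sum_nonneg fun _ _ => sq_nonneg _
  have hN2 : (0:ℝ) ≤ ∑ i, u₂ i ^ 2 := Finset.sum_nonneg fun _ _ => sq_nonneg _
  have hN3 : (0:ℝ) ≤ ∑ i, v₁ i ^ 2 := Finset.sum_nonneg fun _ _ => sq_nonneg _
  have hN4 : (0:ℝ) ≤ ∑ i, v₂ i ^ 2 := Finset.sum_nonneg fun _ _ => sq_nonneg _
  rw [max_sq_of_nonneg hN1 hN2, max_sq_of_nonneg hN3 hN4,
      max_sq_of_nonneg (le_trans hN1 (le_max_left _ _)) (le_trans hN3 (le_max_left _ _))]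
  set S := max (max (∑ i, u₁ i ^ 2) (∑ i, u₂ i ^ 2)) (max (∑ i, v₁ i ^ 2) (∑ i, v₂ i ^ 2))
    with hSdef
  have hS1 : (∑ i, u₁ i ^ 2) ≤ S := le_trans (le_max_left _ _) (le_max_left _ _)
  have hS2 : (∑ i, u₂ i ^ 2) ≤ S := le_trans (le_max_right _ _) (le_max_left _ _)
  have hS3 : (∑ i, v₁ i ^ 2) ≤ S := le_trans (le_max_left _ _) (le_max_right _ _)
  have hS4 : (∑ i, v₂ i ^ 2) ≤ S := le_trans (le_max_right _ _) (le_max_right _ _)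
  have hS0 : (0:ℝ) ≤ S := le_trans hN1 hS1
  have hn0 : (0:ℝ) ≤ (n:ℝ) := Nat.cast_nonneg n
  unfold matOpNorm
  apply Real.sSup_le
  swap
  · positivity
  rintro r ⟨x, hx, rfl⟩
  set D := derivMat (fun b =>
      (dotR u₁ (sgnVec b) ^ 2 + dotR u₂ (sgnVec b) ^ 2) *
      (dotR v₁ (sgnVec b) ^ 2 + dotR v₂ (sgnVec b) ^ 2)) with hD
  set U := Uvec u₁ u₂ with hU
  set V := Uvec v₁ v₂ with hV
  have hUnn : ∀ l, 0 ≤ U l := fun l => Real.sqrt_nonneg _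
  have hVnn : ∀ l, 0 ≤ V l := fun l => Real.sqrt_nonneg _
  have hDE : ∀ i j, D i j ≤ 2 * ((n : ℝ) * S) * (U i * U j + V i * V j)
      + 4 * ((n : ℝ) * S) * (U i * V j + U j * V i) :=
    fun i j => entry_bound u₁ u₂ v₁ v₂ hu hv S hS1 hS2 hS3 hS4 hS0 i j
  have hD0 : ∀ i j, 0 ≤ D i j := by
    intro i j
    exact le_ciSup_of_le (Set.finite_range _).bddAbove (fun _ => false) (abs_nonneg _)
  set α := ∑ l, U l * |x l| with hα
  set β := ∑ l, V l * |x l| with hβ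
  set c := 2 * ((n:ℝ) * S) * α + 4 * ((n:ℝ) * S) * β with hc
  set d := 2 * ((n:ℝ) * S) * β + 4 * ((n:ℝ) * S) * α with hd
  have hα0 : 0 ≤ α := Finset.sum_nonneg fun l _ => mul_nonneg (hUnn l) (abs_nonneg _)
  have hβ0 : 0 ≤ β := Finset.sum_nonneg fun l _ => mul_nonneg (hVnn l) (abs_nonneg _)
  have hc0 : 0 ≤ c := by rw [hc]; positivity
  have hd0 : 0 ≤ d := by rw [hd]; positivity
  have hrow : ∀ i, |∑ j, D i j * x j| ≤ c * U i + d * V i := by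
    intro i
    calc |∑ j, D i j * x j| ≤ ∑ j, |D i j * x j| := Finset.abs_sum_le_sum_abs _ _
      _ ≤ ∑ j, (2 * ((n : ℝ) * S) * (U i * U j + V i * V j)
            + 4 * ((n : ℝ) * S) * (U i * V j + U j * V i)) * |x j| := by
          apply Finset.sum_le_sum
          intro j _
          rw [abs_mul, abs_of_nonneg (hD0 i j)]
          exact mul_le_mul_of_nonneg_right (hDE i j) (abs_nonneg _)
      _ = ∑ j, ((2 * ((n:ℝ) * S) * U i + 4 * ((n:ℝ) * S) * V i) * (U j * |x j|)
            + (2 * ((n:ℝ) * S) * V i + 4 * ((n:ℝ) * S) * U i) * (V j * |x j|)) :=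
          Finset.sum_congr rfl fun j _ => by ring
      _ = (2 * ((n:ℝ) * S) * U i + 4 * ((n:ℝ) * S) * V i) * α
            + (2 * ((n:ℝ) * S) * V i + 4 * ((n:ℝ) * S) * U i) * β := by
          rw [Finset.sum_add_distrib, ← Finset.mul_sum, ← Finset.mul_sum, ← hα, ← hβ]
      _ = c * U i + d * V i := by rw [hc, hd]; ring
  have hU2 : (∑ l, U l ^ 2) ≤ 2 * S := by
    have e : ∀ l : Fin n, U l ^ 2 = u₁ l ^ 2 + u₂ l ^ 2 := fun l =>
      Real.sq_sqrt (by positivity)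
    rw [Finset.sum_congr rfl fun l _ => e l, Finset.sum_add_distrib]
    linarith
  have hV2 : (∑ l, V l ^ 2) ≤ 2 * S := by
    have e : ∀ l : Fin n, V l ^ 2 = v₁ l ^ 2 + v₂ l ^ 2 := fun l =>
      Real.sq_sqrt (by positivity)
    rw [Finset.sum_congr rfl fun l _ => e l, Finset.sum_add_distrib]
    linarith
  have hUV : (∑ l, U l * V l) ≤ 2 * S := by
    have hcs := Finset.sum_mul_sq_le_sq_mul_sq Finset.univ U V
    have h0 : 0 ≤ ∑ l, U l * V l := Finset.sum_nonneg fun l _ => mul_nonneg (hUnn l) (hVnn l)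
    have hUs : (0:ℝ) ≤ ∑ l, U l ^ 2 := Finset.sum_nonneg fun l _ => sq_nonneg _
    nlinarith [hcs, hU2, hV2, h0, hUs, hS0]
  have hα2 : α ^ 2 ≤ 2 * S := by
    have hcs := Finset.sum_mul_sq_le_sq_mul_sq Finset.univ U (fun l => |x l|)
    have hxx : (∑ l, |x l| ^ 2) = 1 := by simp only [sq_abs]; exact hx
    rw [hxx, mul_one] at hcs
    calc α ^ 2 ≤ ∑ l, U l ^ 2 := hcs
      _ ≤ 2 * S := hU2
  have hβ2 : β ^ 2 ≤ 2 * S := by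
    have hcs := Finset.sum_mul_sq_le_sq_mul_sq Finset.univ V (fun l => |x l|)
    have hxx : (∑ l, |x l| ^ 2) = 1 := by simp only [sq_abs]; exact hx
    rw [hxx, mul_one] at hcs
    calc β ^ 2 ≤ ∑ l, V l ^ 2 := hcs
      _ ≤ 2 * S := hV2
  have hsum : (∑ i, (∑ j, D i j * x j) ^ 2) ≤ ∑ i, (c * U i + d * V i) ^ 2 := by
    apply Finset.sum_le_sum
    intro i _
    have h := abs_le.mp (hrow i)
    exact sq_le_sq' h.1 h.2
  have hexp : (∑ i, (c * U i + d * V i) ^ 2)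
      = c ^ 2 * (∑ l, U l ^ 2) + 2 * c * d * (∑ l, U l * V l) + d ^ 2 * (∑ l, V l ^ 2) := by
    rw [Finset.mul_sum, Finset.mul_sum, Finset.mul_sum, ← Finset.sum_add_distrib,
      ← Finset.sum_add_distrib]
    exact Finset.sum_congr rfl fun l _ => by ring
  have hQ1 : (∑ i, (c * U i + d * V i) ^ 2) ≤ c ^ 2 * (2 * S) + 2 * c * d * (2 * S) + d ^ 2 * (2 * S) := by
    rw [hexp]
    have e1 : c ^ 2 * (∑ l, U l ^ 2) ≤ c ^ 2 * (2 * S) :=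
      mul_le_mul_of_nonneg_left hU2 (sq_nonneg c)
    have e2 : 2 * c * d * (∑ l, U l * V l) ≤ 2 * c * d * (2 * S) :=
      mul_le_mul_of_nonneg_left hUV (by positivity)
    have e3 : d ^ 2 * (∑ l, V l ^ 2) ≤ d ^ 2 * (2 * S) :=
      mul_le_mul_of_nonneg_left hV2 (sq_nonneg d)
    linarith only [e1, e2, e3]
  have hcd : c + d = 6 * ((n:ℝ) * S) * (α + β) := by rw [hc, hd]; ring
  have hab2 : (α + β) ^ 2 ≤ 8 * S := by nlinarith [hα2, hβ2, sq_nonneg (α - β)]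
  have hQ2 : c ^ 2 * (2 * S) + 2 * c * d * (2 * S) + d ^ 2 * (2 * S) = 2 * S * (c + d) ^ 2 := by
    ring
  have hQ3 : 2 * S * (c + d) ^ 2 ≤ (40 * (n:ℝ) * S ^ 2) ^ 2 := by
    rw [hcd]
    have e : (6 * ((n:ℝ) * S) * (α + β)) ^ 2 = 36 * (n:ℝ) ^ 2 * S ^ 2 * (α + β) ^ 2 := by ring
    rw [e]
    have e2 : 36 * (n:ℝ) ^ 2 * S ^ 2 * (α + β) ^ 2 ≤ 36 * (n:ℝ) ^ 2 * S ^ 2 * (8 * S) :=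
      mul_le_mul_of_nonneg_left hab2 (by positivity)
    have e3 : 2 * S * (36 * (n:ℝ) ^ 2 * S ^ 2 * (α + β) ^ 2) ≤ 2 * S * (36 * (n:ℝ) ^ 2 * S ^ 2 * (8 * S)) :=
      mul_le_mul_of_nonneg_left e2 (by positivity)
    have e4 : 2 * S * (36 * (n:ℝ) ^ 2 * S ^ 2 * (8 * S)) ≤ (40 * (n:ℝ) * S ^ 2) ^ 2 := by
      nlinarith [sq_nonneg ((n:ℝ) * S ^ 2), hS0, hn0, sq_nonneg (n:ℝ)]
    linarith only [e3, e4]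
  have hQ : (∑ i, (∑ j, D i j * x j) ^ 2) ≤ (40 * (n:ℝ) * S ^ 2) ^ 2 := by
    calc (∑ i, (∑ j, D i j * x j) ^ 2) ≤ ∑ i, (c * U i + d * V i) ^ 2 := hsum
      _ ≤ c ^ 2 * (2 * S) + 2 * c * d * (2 * S) + d ^ 2 * (2 * S) := hQ1
      _ = 2 * S * (c + d) ^ 2 := hQ2
      _ ≤ (40 * (n:ℝ) * S ^ 2) ^ 2 := hQ3
  calc Real.sqrt (∑ i, (∑ j, D i j * x j) ^ 2)
      ≤ Real.sqrt ((40 * (n:ℝ) * S ^ 2) ^ 2) := Real.sqrt_le_sqrt hQ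
    _ = 40 * (n:ℝ) * S ^ 2 := Real.sqrt_sq (by positivity)
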